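/- Fix d ≥ 2, θ ∈ (0, π/2), an integer m with m ≤ 2(⌊(π/2 − θ)/θ⌋ + 1), constants C, C1, C3 > 0, and a 1-Lipschitz function h : ℝ → ℝ. Let P be a probability measure on ℝ^d supported in the ball {x : ‖x‖₂ ≤ C1}. Let f'(x) = Σ_{j=1}^m α_j h(⟨w'_j, x⟩) with |α_j| ≤ 2C and w'_j nonzero, ‖w'_j‖₂ ≤ C3 for all j. Then there exist nonzero vectors w_1,…,w_m ∈ ℝ^d with ‖w_j‖₂ = ‖w'_j‖₂ and ρ(w_j, w_k) ≥ θ for all j ≠ k such that the function f(x) = Σ_{j=1}^m α_j h(⟨w_j, x⟩) satisfies (∫ (f(x) − f'(x))² dP(x))^{1/2} ≤ 4 m C C1 C3 sin(θ'/2), where θ' = min(3mθ, π). -/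

import Mathlib

open RealInnerProductSpace MeasureTheory

/-- The nonobtuse angle `ρ(u,v) = arccos(|⟨u,v⟩| / (‖u‖‖v‖))` between two vectors. -/
noncomputable def rho {E : Type*} [NormedAddCommGroup E] [InnerProductSpace ℝ E]
    (u v : E) : ℝ :=
  Real.arccos (|⟪u, v⟫| / (‖u‖ * ‖v‖))

open Real

section helpers
variable {E : Type*} [NormedAddCommGroup E] [InnerProductSpace ℝ E]

lemma rho_comm (u v : E) : rho u v = rho v u := by
  unfold rho; rw [real_inner_comm, mul_comm]

lemma abs_cos_le_cos {θ x : ℝ} (h0 : 0 ≤ θ) (h1 : θ ≤ x) (h2 : x ≤ π - θ) :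
    |Real.cos x| ≤ Real.cos θ := by
  have hπ : θ ≤ π := by nlinarith [Real.pi_pos]
  rw [abs_le]
  constructor
  · have := Real.cos_le_cos_of_nonneg_of_le_pi (by linarith : (0:ℝ) ≤ x) (by linarith) h2
    rwa [Real.cos_pi_sub] at this
  · exact Real.cos_le_cos_of_nonneg_of_le_pi h0 (by linarith) h1

lemma le_rho {θ : ℝ} (hθ0 : 0 ≤ θ) (hθπ : θ ≤ π) {u v : E} (hu : u ≠ 0) (hv : v ≠ 0)
    (h : |⟪u, v⟫| ≤ Real.cos θ * (‖u‖ * ‖v‖)) : θ ≤ rho u v := by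
  have hnu : 0 < ‖u‖ := norm_pos_iff.mpr hu
  have hnv : 0 < ‖v‖ := norm_pos_iff.mpr hv
  have hq : |⟪u, v⟫| / (‖u‖ * ‖v‖) ≤ Real.cos θ := by
    rw [div_le_iff₀ (by positivity)]; linarith
  have : Real.arccos (Real.cos θ) ≤ rho u v := by
    unfold rho
    unfold Real.arccos
    have := Real.monotone_arcsin hq
    linarith
  rwa [Real.arccos_cos hθ0 hθπ] at this

lemma inner_lt_of_rho_lt {θ : ℝ} (hθ0 : 0 ≤ θ) (hθπ : θ ≤ π) {u v : E} (hu : u ≠ 0) (hv : v ≠ 0)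
    (h : rho u v < θ) : Real.cos θ * (‖u‖ * ‖v‖) < |⟪u, v⟫| := by
  by_contra hc
  push_neg at hc
  exact absurd (le_rho hθ0 hθπ hu hv hc) (not_le.mpr h)

end helpers
section comb
variable {E : Type*} [NormedAddCommGroup E] [InnerProductSpace ℝ E]
variable {u e : E}

lemma inner_comb (a b : ℝ) (v : E) : ⟪a • u + b • e, v⟫ = a * ⟪u, v⟫ + b * ⟪e, v⟫ := by
  rw [inner_add_left, real_inner_smul_left, real_inner_smul_left]

lemma norm_comb_sq (hu : ‖u‖ = 1) (he : ‖e‖ = 1) (hue : ⟪u, e⟫ = 0) (a b : ℝ) :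
    ‖a • u + b • e‖ ^ 2 = a ^ 2 + b ^ 2 := by
  have hue' : ⟪e, u⟫ = (0 : ℝ) := by rw [real_inner_comm]; exact hue
  rw [← real_inner_self_eq_norm_sq, inner_comb]
  rw [inner_add_right, inner_add_right, real_inner_smul_right, real_inner_smul_right,
    real_inner_smul_right, real_inner_smul_right]
  simp only [hue, hue', real_inner_self_eq_norm_sq, hu, he]
  ring

lemma norm_cand (hu : ‖u‖ = 1) (he : ‖e‖ = 1) (hue : ⟪u, e⟫ = 0) (t : ℝ) :
    ‖Real.cos t • u + Real.sin t • e‖ = 1 := by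
  have h := norm_comb_sq hu he hue (Real.cos t) (Real.sin t)
  rw [Real.cos_sq_add_sin_sq] at h
  nlinarith [norm_nonneg (Real.cos t • u + Real.sin t • e)]

end comb

set_option maxHeartbeats 1000000 in
/-- Core trig fact: two rotations whose (projective) angular distance is at least `2θ`
cannot both be within (projective) angle `< θ` of the same direction. -/
lemma trig_unique {θ p q N x y : ℝ} (hθ0 : 0 < θ) (hθ2 : θ < π / 2)
    (hN : 0 < N) (hpq : p ^ 2 + q ^ 2 ≤ N ^ 2)
    (hx : Real.cos θ * N < |Real.cos x * p + Real.sin x * q|)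
    (hy : Real.cos θ * N < |Real.cos y * p + Real.sin y * q|)
    (hxy : |Real.cos (x - y)| ≤ Real.cos (2 * θ)) : False := by
  have hπ := Real.pi_pos
  have hcθ : 0 < Real.cos θ := Real.cos_pos_of_mem_Ioo ⟨by linarith, hθ2⟩
  set z : ℂ := ⟨p, q⟩ with hz
  have hzne : z ≠ 0 := by
    intro h0
    have hp : p = 0 := congrArg Complex.re h0
    have hq : q = 0 := congrArg Complex.im h0
    rw [hp, hq] at hx
    simp at hx
    nlinarith
  set R := ‖z‖ with hR
  have hRpos : 0 < R := norm_pos_iff.mpr hzne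
  have hRN : R ≤ N := by
    have : R ^ 2 = p ^ 2 + q ^ 2 := by
      rw [hR, Complex.sq_norm, Complex.normSq_apply]; simp [hz]; ring
    nlinarith
  have hp' : p = R * Real.cos (Complex.arg z) := by
    rw [hR, Complex.norm_mul_cos_arg]
  have hq' : q = R * Real.sin (Complex.arg z) := by
    rw [hR, Complex.norm_mul_sin_arg]
  set φ := Complex.arg z
  have key : ∀ t : ℝ, Real.cos θ * N < |Real.cos t * p + Real.sin t * q| →
      Real.cos θ < |Real.cos (t - φ)| := by
    intro t ht
    have : Real.cos t * p + Real.sin t * q = R * Real.cos (t - φ) := by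
      rw [hp', hq', Real.cos_sub]; ring
    rw [this, abs_mul, abs_of_pos hRpos] at ht
    by_contra hc
    push_neg at hc
    have : R * |Real.cos (t - φ)| ≤ N * Real.cos θ :=
      mul_le_mul hRN hc (abs_nonneg _) (le_of_lt hN)
    nlinarith
  have hx' := key x hx
  have hy' := key y hy
  set a := Real.arccos |Real.cos (x - φ)| with ha
  set b := Real.arccos |Real.cos (y - φ)| with hb
  have ha0 : 0 ≤ a := Real.arccos_nonneg _
  have hb0 : 0 ≤ b := Real.arccos_nonneg _
  have habs1 : |Real.cos (x - φ)| ≤ 1 := Real.abs_cos_le_one _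
  have habs2 : |Real.cos (y - φ)| ≤ 1 := Real.abs_cos_le_one _
  have hm1a : (-1 : ℝ) ≤ |Real.cos (x - φ)| := le_trans (by norm_num) (abs_nonneg _)
  have hm1b : (-1 : ℝ) ≤ |Real.cos (y - φ)| := le_trans (by norm_num) (abs_nonneg _)
  have haθ : a < θ := by
    by_contra hc
    push_neg at hc
    have : Real.cos a ≤ Real.cos θ :=
      Real.cos_le_cos_of_nonneg_of_le_pi hθ0.le (by rw [ha]; exact Real.arccos_le_pi _) hc
    rw [ha, Real.cos_arccos hm1a habs1] at this
    linarith
  have hbθ : b < θ := by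
    by_contra hc
    push_neg at hc
    have : Real.cos b ≤ Real.cos θ :=
      Real.cos_le_cos_of_nonneg_of_le_pi hθ0.le (by rw [hb]; exact Real.arccos_le_pi _) hc
    rw [hb, Real.cos_arccos hm1b habs2] at this
    linarith
  have hcosa : Real.cos a = |Real.cos (x - φ)| := Real.cos_arccos hm1a habs1
  have hcosb : Real.cos b = |Real.cos (y - φ)| := Real.cos_arccos hm1b habs2
  have hsina : Real.sin a = |Real.sin (x - φ)| := by
    rw [ha, Real.sin_arccos, sq_abs,
      show (1 : ℝ) - Real.cos (x - φ) ^ 2 = Real.sin (x - φ) ^ 2 by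
        nlinarith [Real.sin_sq_add_cos_sq (x - φ)]]
    exact Real.sqrt_sq_eq_abs _
  have hsinb : Real.sin b = |Real.sin (y - φ)| := by
    rw [hb, Real.sin_arccos, sq_abs,
      show (1 : ℝ) - Real.cos (y - φ) ^ 2 = Real.sin (y - φ) ^ 2 by
        nlinarith [Real.sin_sq_add_cos_sq (y - φ)]]
    exact Real.sqrt_sq_eq_abs _
  have hlow : Real.cos (a + b) ≤ |Real.cos (x - y)| := by
    have h1 : |Real.cos (x - φ)| * |Real.cos (y - φ)| - |Real.sin (x - φ)| * |Real.sin (y - φ)|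
        ≤ |Real.cos (x - φ) * Real.cos (y - φ) + Real.sin (x - φ) * Real.sin (y - φ)| := by
      have := abs_sub_abs_le_abs_sub (Real.cos (x - φ) * Real.cos (y - φ))
        (-(Real.sin (x - φ) * Real.sin (y - φ)))
      rw [abs_neg, abs_mul, abs_mul, sub_neg_eq_add] at this
      exact this
    calc Real.cos (a + b) = Real.cos a * Real.cos b - Real.sin a * Real.sin b := Real.cos_add a b
      _ = |Real.cos (x - φ)| * |Real.cos (y - φ)| - |Real.sin (x - φ)| * |Real.sin (y - φ)| := by
          rw [hcosa, hcosb, hsina, hsinb]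
      _ ≤ |Real.cos (x - φ) * Real.cos (y - φ) + Real.sin (x - φ) * Real.sin (y - φ)| := h1
      _ = |Real.cos ((x - φ) - (y - φ))| := (congrArg abs (Real.cos_sub (x - φ) (y - φ))).symm
      _ = |Real.cos (x - y)| := by rw [sub_sub_sub_cancel_right]
  have hstrict : Real.cos (2 * θ) < Real.cos (a + b) :=
    Real.cos_lt_cos_of_nonneg_of_le_pi (by positivity) (by linarith) (by linarith)
  linarith

section greedy
variable {E : Type*} [NormedAddCommGroup E] [InnerProductSpace ℝ E]

lemma bessel_two {u e : E} (hu : ‖u‖ = 1) (he : ‖e‖ = 1) (hue : ⟪u, e⟫ = 0) (v : E) :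
    ⟪u, v⟫ ^ 2 + ⟪e, v⟫ ^ 2 ≤ ‖v‖ ^ 2 := by
  have hexp : ‖v - (⟪u, v⟫ • u + ⟪e, v⟫ • e)‖ ^ 2 = ‖v‖ ^ 2 - (⟪u, v⟫ ^ 2 + ⟪e, v⟫ ^ 2) := by
    rw [norm_sub_sq_real, norm_comb_sq hu he hue, inner_add_right, real_inner_smul_right,
      real_inner_smul_right, real_inner_comm v u, real_inner_comm v e]
    ring
  nlinarith [sq_nonneg ‖v - (⟪u, v⟫ • u + ⟪e, v⟫ • e)‖]

set_option maxHeartbeats 1000000 in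
lemma exists_good_candidate (θ : ℝ) (hθ0 : 0 < θ) (hθ2 : θ < π / 2) (m n : ℕ) (hn : n < m)
    (h3m : 3 * m * θ < π) {u e : E} (hu : ‖u‖ = 1) (he : ‖e‖ = 1) (hue : ⟪u, e⟫ = 0)
    (v : Fin n → E) (hv : ∀ i, v i ≠ 0) :
    ∃ k < m, ∀ i, θ ≤
      rho (Real.cos (2 * k * θ) • u + Real.sin (2 * k * θ) • e) (v i) := by
  have hπ := Real.pi_pos
  have hm1 : 1 ≤ m := by omega
  set cand : ℕ → E := fun k => Real.cos (2 * k * θ) • u + Real.sin (2 * k * θ) • e with hcand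
  have hnc : ∀ k, ‖cand k‖ = 1 := fun k => norm_cand hu he hue _
  have hcne : ∀ k, cand k ≠ 0 := fun k => by
    intro h0; have := hnc k; rw [h0, norm_zero] at this; norm_num at this
  have h2m : 2 * (m : ℝ) * θ ≤ π := by
    have : 2 * (m : ℝ) * θ ≤ 3 * m * θ := by
      have hm0 : (1 : ℝ) ≤ (m : ℝ) := by exact_mod_cast hm1
      nlinarith
    linarith
  -- at most one bad candidate per previous vector
  have huniq : ∀ i : Fin n, ∀ k l, k < m → l < m →
      rho (cand k) (v i) < θ → rho (cand l) (v i) < θ → k = l := by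
    intro i k l hk hl hbk hbl
    have hvi := hv i
    have hNpos : 0 < ‖v i‖ := norm_pos_iff.mpr hvi
    have hinner : ∀ j : ℕ, rho (cand j) (v i) < θ →
        Real.cos θ * ‖v i‖ < |Real.cos (2 * j * θ) * ⟪u, v i⟫ + Real.sin (2 * j * θ) * ⟪e, v i⟫| := by
      intro j hj
      have := inner_lt_of_rho_lt hθ0.le (by linarith) (hcne j) hvi hj
      rw [hnc j, one_mul] at this
      rwa [hcand, inner_comb] at this
    have key : ∀ k' l' : ℕ, k' < m → l' < k' →
        Real.cos θ * ‖v i‖ <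
          |Real.cos (2 * k' * θ) * ⟪u, v i⟫ + Real.sin (2 * k' * θ) * ⟪e, v i⟫| →
        Real.cos θ * ‖v i‖ <
          |Real.cos (2 * l' * θ) * ⟪u, v i⟫ + Real.sin (2 * l' * θ) * ⟪e, v i⟫| → False := by
      intro k' l' hk' hlk hbk' hbl'
      refine trig_unique hθ0 hθ2 hNpos (bessel_two hu he hue (v i)) hbk' hbl' ?_
      have hj1 : 1 ≤ k' - l' := by omega
      have hjm : k' - l' + 1 ≤ m := by omega
      have hcast : 2 * (k' : ℝ) * θ - 2 * (l' : ℝ) * θ = 2 * ((k' - l' : ℕ) : ℝ) * θ := by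
        push_cast [Nat.cast_sub hlk.le]; ring
      rw [hcast]
      apply abs_cos_le_cos (by positivity)
      · have : (1 : ℝ) ≤ ((k' - l' : ℕ) : ℝ) := by exact_mod_cast hj1
        nlinarith
      · have : ((k' - l' : ℕ) : ℝ) + 1 ≤ (m : ℝ) := by exact_mod_cast hjm
        nlinarith
    rcases lt_trichotomy k l with hlt | heq | hgt
    · exact absurd (key l k hl hlt (hinner l hbl) (hinner k hbk)) not_false
    · exact heq
    · exact absurd (key k l hk hgt (hinner k hbk) (hinner l hbl)) not_false
  -- pigeonhole
  set Bad : Finset ℕ := (Finset.range m).filter (fun k => ∃ i, rho (cand k) (v i) < θ) with hBad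
  have hcard : Bad.card ≤ n := by
    have hsub : Bad ⊆ Finset.biUnion (Finset.univ : Finset (Fin n))
        (fun i => (Finset.range m).filter (fun k => rho (cand k) (v i) < θ)) := by
      intro k hk
      rw [hBad, Finset.mem_filter] at hk
      obtain ⟨hkm, i, hi⟩ := hk
      exact Finset.mem_biUnion.mpr ⟨i, Finset.mem_univ i, Finset.mem_filter.mpr ⟨hkm, hi⟩⟩
    calc Bad.card ≤ _ := Finset.card_le_card hsub
      _ ≤ ∑ i : Fin n, ((Finset.range m).filter (fun k => rho (cand k) (v i) < θ)).card :=
          Finset.card_biUnion_le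
      _ ≤ ∑ _i : Fin n, 1 := by
          apply Finset.sum_le_sum
          intro i _
          apply Finset.card_le_one.mpr
          intro k hk l hl
          rw [Finset.mem_filter, Finset.mem_range] at hk hl
          exact huniq i k l hk.1 hl.1 hk.2 hl.2
      _ = n := by simp
  have hex : ∃ k ∈ Finset.range m, k ∉ Bad := by
    by_contra hc
    push_neg at hc
    have : (Finset.range m) ⊆ Bad := fun k hk => hc k hk
    have := Finset.card_le_card this
    rw [Finset.card_range] at this
    omega
  obtain ⟨k, hkm, hknb⟩ := hex
  rw [Finset.mem_range] at hkm
  refine ⟨k, hkm, fun i => ?_⟩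
  rw [hBad, Finset.mem_filter] at hknb
  push_neg at hknb
  exact hknb (Finset.mem_range.mpr hkm) i

end greedy

section build
variable {E : Type*} [NormedAddCommGroup E] [InnerProductSpace ℝ E]

lemma exists_unit_ortho [FiniteDimensional ℝ E] (hd : 2 ≤ Module.finrank ℝ E)
    {v : E} (hv : v ≠ 0) : ∃ e : E, ‖e‖ = 1 ∧ ⟪v, e⟫ = 0 := by
  set K : Submodule ℝ E := ℝ ∙ v with hK
  have hKbot : Kᗮ ≠ ⊥ := by
    intro hbot
    have h1 : Module.finrank ℝ K + Module.finrank ℝ Kᗮ = Module.finrank ℝ E :=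
      Submodule.finrank_add_finrank_orthogonal K
    rw [hbot, finrank_bot] at h1
    rw [hK, finrank_span_singleton hv] at h1
    omega
  obtain ⟨x, hxK, hx0⟩ := Submodule.exists_mem_ne_zero_of_ne_bot hKbot
  refine ⟨‖x‖⁻¹ • x, norm_smul_inv_norm hx0, ?_⟩
  rw [real_inner_smul_right]
  have : ⟪v, x⟫ = 0 := by
    have := (Submodule.mem_orthogonal K x).mp hxK v (Submodule.mem_span_singleton_self v)
    exact this
  rw [this, mul_zero]

lemma rho_smul {a b : ℝ} (ha : 0 < a) (hb : 0 < b) (x y : E) :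
    rho (a • x) (b • y) = rho x y := by
  unfold rho
  congr 1
  have h1 : |⟪a • x, b • y⟫| = (a * b) * |⟪x, y⟫| := by
    rw [real_inner_smul_left, real_inner_smul_right, ← mul_assoc, abs_mul, abs_mul,
      abs_of_pos ha, abs_of_pos hb]
  have h2 : ‖a • x‖ * ‖b • y‖ = (a * b) * (‖x‖ * ‖y‖) := by
    rw [norm_smul, norm_smul, Real.norm_eq_abs, Real.norm_eq_abs, abs_of_pos ha, abs_of_pos hb]
    ring
  rw [h1, h2, mul_div_mul_left _ _ (by positivity : a * b ≠ 0)]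

set_option maxHeartbeats 1000000 in
lemma greedy (θ : ℝ) (hθ0 : 0 < θ) (hθ2 : θ < π / 2) (m : ℕ) (h3m : 3 * m * θ < π)
    [FiniteDimensional ℝ E] (hd : 2 ≤ Module.finrank ℝ E)
    (w' : Fin m → E) (hw'ne : ∀ j, w' j ≠ 0) :
    ∀ n, n ≤ m → ∃ w : Fin m → E, (∀ i, w i ≠ 0) ∧ (∀ i, ‖w i‖ = ‖w' i‖) ∧
      (∀ i, ‖w i - w' i‖ ≤ 2 * ‖w' i‖ * Real.sin (3 * m * θ / 2)) ∧
      (∀ i j : Fin m, i ≠ j → (i : ℕ) < n → (j : ℕ) < n → θ ≤ rho (w i) (w j)) := by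
  have hπ := Real.pi_pos
  have hs30 : 0 ≤ Real.sin (3 * m * θ / 2) := by
    apply Real.sin_nonneg_of_nonneg_of_le_pi (by positivity)
    linarith
  intro n
  induction n with
  | zero =>
    intro _
    exact ⟨w', hw'ne, fun i => rfl, fun i => by
      have := norm_nonneg (w' i); simp only [sub_self, norm_zero]; positivity,
      fun i j _ hi _ => absurd hi (Nat.not_lt_zero _)⟩
  | succ n ih =>
    intro hn1
    obtain ⟨w, hne, hnorm, hchord, hsep⟩ := ih (by omega)
    have hnm : n < m := hn1
    set jn : Fin m := ⟨n, hnm⟩ with hjn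
    set r : ℝ := ‖w' jn‖ with hr
    have hrpos : 0 < r := norm_pos_iff.mpr (hw'ne jn)
    set u : E := r⁻¹ • w' jn with hu'
    have hu : ‖u‖ = 1 := norm_smul_inv_norm (hw'ne jn)
    have huv : w' jn = r • u := by
      rw [hu', smul_inv_smul₀ (ne_of_gt hrpos)]
    have hune : u ≠ 0 := by
      intro h0; rw [h0, norm_zero] at hu; norm_num at hu
    obtain ⟨e, he, hue⟩ := exists_unit_ortho hd hune
    set v : Fin n → E := fun i => w ⟨i.1, lt_of_lt_of_le i.2 (le_of_lt hnm)⟩ with hv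
    obtain ⟨k, hkm, hk⟩ := exists_good_candidate θ hθ0 hθ2 m n hnm h3m hu he hue v
      (fun i => hne _)
    set t : ℝ := 2 * k * θ with ht
    set cand : E := Real.cos t • u + Real.sin t • e with hcand
    have hcn : ‖cand‖ = 1 := norm_cand hu he hue t
    have hcne : cand ≠ 0 := by
      intro h0; rw [h0, norm_zero] at hcn; norm_num at hcn
    set wn : E := r • cand with hwn
    have hwnn : ‖wn‖ = r := by
      rw [hwn, norm_smul, hcn, Real.norm_eq_abs, abs_of_pos hrpos, mul_one]
    have hwnne : wn ≠ 0 := by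
      intro h0; rw [h0, norm_zero] at hwnn; exact (ne_of_gt hrpos) hwnn.symm
    -- chord bound for the new vector
    have hkθ : (k : ℝ) * θ ≤ 3 * m * θ / 2 := by
      have : (k : ℝ) ≤ m := by exact_mod_cast hkm.le
      nlinarith
    have hchordn : ‖wn - w' jn‖ ≤ 2 * ‖w' jn‖ * Real.sin (3 * m * θ / 2) := by
      have hdiff : wn - w' jn = r • (cand - u) := by
        rw [huv, hwn, ← smul_sub]
      have hcu : cand - u = (Real.cos t - 1) • u + Real.sin t • e := by
        rw [hcand, sub_smul, one_smul]; abel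
      have hsq : ‖cand - u‖ ^ 2 = 2 - 2 * Real.cos t := by
        rw [hcu, norm_comb_sq hu he hue]
        nlinarith [Real.sin_sq_add_cos_sq t]
      have hsin : ‖cand - u‖ ^ 2 = (2 * Real.sin (k * θ)) ^ 2 := by
        rw [hsq]
        have h2 := Real.sin_sq_eq_half_sub ((k : ℝ) * θ)
        have ht2 : 2 * ((k : ℝ) * θ) = t := by rw [ht]; ring
        rw [ht2] at h2
        nlinarith
      have hkθ0 : (0 : ℝ) ≤ k * θ := by positivity
      have hsinkθ : Real.sin (k * θ) ≤ Real.sin (3 * m * θ / 2) :=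
        Real.sin_le_sin_of_le_of_le_pi_div_two (by linarith) (by linarith) hkθ
      have hsk0 : 0 ≤ Real.sin (k * θ) := by
        apply Real.sin_nonneg_of_nonneg_of_le_pi hkθ0
        linarith
      have hcub : ‖cand - u‖ ≤ 2 * Real.sin (3 * m * θ / 2) := by
        nlinarith [norm_nonneg (cand - u)]
      rw [hdiff, norm_smul, Real.norm_eq_abs, abs_of_pos hrpos, ← hr]
      calc r * ‖cand - u‖ ≤ r * (2 * Real.sin (3 * m * θ / 2)) := by
            exact mul_le_mul_of_nonneg_left hcub hrpos.le
        _ = 2 * r * Real.sin (3 * m * θ / 2) := by ring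
    refine ⟨Function.update w jn wn, ?_, ?_, ?_, ?_⟩
    · intro i
      rcases eq_or_ne i jn with rfl | hij
      · rw [Function.update_self]; exact hwnne
      · rw [Function.update_of_ne hij]; exact hne i
    · intro i
      rcases eq_or_ne i jn with rfl | hij
      · rw [Function.update_self, hwnn]
      · rw [Function.update_of_ne hij]; exact hnorm i
    · intro i
      rcases eq_or_ne i jn with rfl | hij
      · rw [Function.update_self]; exact hchordn
      · rw [Function.update_of_ne hij]; exact hchord i
    · intro i j hij hi hj
      have hsepn : ∀ i : Fin m, (i : ℕ) < n → θ ≤ rho wn (w i) := by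
        intro i hi'
        have : rho wn (w i) = rho cand (w i) := by
          have : w i = (1 : ℝ) • w i := (one_smul ℝ (w i)).symm
          rw [hwn, this, rho_smul hrpos one_pos, ← this]
        rw [this]
        have := hk ⟨i.1, hi'⟩
        have hvw : v ⟨i.1, hi'⟩ = w i := by
          rw [hv]
        rw [hvw] at this
        exact this
      have hvaljn : (jn : ℕ) = n := rfl
      have hne_jn : ∀ i' : Fin m, (i' : ℕ) < n → i' ≠ jn := by
        intro i' hi' heq
        rw [heq, hvaljn] at hi'
        omega
      by_cases hi' : (i : ℕ) < n <;> by_cases hj' : (j : ℕ) < n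
      · rw [Function.update_of_ne (hne_jn i hi'), Function.update_of_ne (hne_jn j hj')]
        exact hsep i j hij hi' hj'
      · have hjn' : j = jn := Fin.ext (by rw [hvaljn]; omega)
        subst hjn'
        rw [Function.update_self, Function.update_of_ne (hne_jn i hi'), rho_comm]
        exact hsepn i hi'
      · have hin' : i = jn := Fin.ext (by rw [hvaljn]; omega)
        subst hin'
        rw [Function.update_self, Function.update_of_ne (hne_jn j hj')]
        exact hsepn j hj'
      · exact absurd (Fin.ext (by omega) : i = j) hij

end build

section final
variable {E : Type*} [NormedAddCommGroup E] [InnerProductSpace ℝ E]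

lemma inner_cand {u e : E} (hu : ‖u‖ = 1) (he : ‖e‖ = 1) (hue : ⟪u, e⟫ = 0) (s t : ℝ) :
    ⟪Real.cos s • u + Real.sin s • e, Real.cos t • u + Real.sin t • e⟫ = Real.cos (s - t) := by
  have hue' : ⟪e, u⟫ = (0 : ℝ) := by rw [real_inner_comm]; exact hue
  have huu : ⟪u, u⟫ = (1 : ℝ) := by rw [real_inner_self_eq_norm_sq, hu]; norm_num
  have hee : ⟪e, e⟫ = (1 : ℝ) := by rw [real_inner_self_eq_norm_sq, he]; norm_num
  rw [inner_comb, inner_add_right, inner_add_right, real_inner_smul_right, real_inner_smul_right,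
    real_inner_smul_right, real_inner_smul_right, huu, hee, hue, hue', Real.cos_sub]
  ring

lemma equiangular (θ : ℝ) (hθ0 : 0 < θ) (hθ2 : θ < π / 2) (m : ℕ) (hmθ : m * θ ≤ π)
    {u e : E} (hu : ‖u‖ = 1) (he : ‖e‖ = 1) (hue : ⟪u, e⟫ = 0)
    (r : Fin m → ℝ) (hr : ∀ j, 0 < r j) :
    ∃ w : Fin m → E, (∀ j, w j ≠ 0) ∧ (∀ j, ‖w j‖ = r j) ∧
      (∀ i j, i ≠ j → θ ≤ rho (w i) (w j)) := by
  have hπ := Real.pi_pos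
  set cand : ℕ → E := fun k => Real.cos (k * θ) • u + Real.sin (k * θ) • e with hcand
  have hnc : ∀ k, ‖cand k‖ = 1 := fun k => norm_cand hu he hue _
  have hcne : ∀ k, cand k ≠ 0 := fun k => by
    intro h0; have := hnc k; rw [h0, norm_zero] at this; norm_num at this
  refine ⟨fun j => r j • cand j, ?_, ?_, ?_⟩
  · intro j
    exact smul_ne_zero (ne_of_gt (hr j)) (hcne j)
  · intro j
    rw [norm_smul, hnc, Real.norm_eq_abs, abs_of_pos (hr j), mul_one]
  · have key : ∀ i j : Fin m, (j : ℕ) < (i : ℕ) → θ ≤ rho (r i • cand i) (r j • cand j) := by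
      intro i j hji
      rw [rho_smul (hr i) (hr j)]
      apply le_rho hθ0.le (by linarith) (hcne i) (hcne j)
      rw [hcand, inner_cand hu he hue, hnc, hnc, mul_one, mul_one]
      have hc : (i : ℝ) * θ - (j : ℝ) * θ = (((i : ℕ) - (j : ℕ) : ℕ) : ℝ) * θ := by
        push_cast [Nat.cast_sub hji.le]
        ring
      rw [hc]
      have h1 : 1 ≤ (((i : ℕ) - (j : ℕ) : ℕ) : ℝ) := by
        have : 1 ≤ (i : ℕ) - (j : ℕ) := by omega
        exact_mod_cast this
      have h2 : (((i : ℕ) - (j : ℕ) : ℕ) : ℝ) + 1 ≤ (m : ℝ) := by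
        have : (i : ℕ) - (j : ℕ) + 1 ≤ m := by omega
        exact_mod_cast this
      apply abs_cos_le_cos hθ0.le (by nlinarith) (by nlinarith)
    intro i j hij
    rcases lt_trichotomy (j : ℕ) (i : ℕ) with hlt | heq | hgt
    · exact key i j hlt
    · exact absurd (Fin.ext heq.symm) hij
    · rw [rho_comm]; exact key j i hgt
end final

set_option maxHeartbeats 1000000 in
lemma l2_bound {d m : ℕ} (C C1 C3 s : ℝ) (hC : 0 < C) (hC1 : 0 < C1) (hC3 : 0 < C3)
    (hs0 : 0 ≤ s) (h : ℝ → ℝ) (hLip : LipschitzWith 1 h)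
    (P : Measure (EuclideanSpace ℝ (Fin d))) [IsProbabilityMeasure P]
    (hsupp : ∀ᵐ x ∂P, ‖x‖ ≤ C1) (α : Fin m → ℝ) (hα : ∀ j, |α j| ≤ 2 * C)
    (w w' : Fin m → EuclideanSpace ℝ (Fin d)) (hchord : ∀ j, ‖w j - w' j‖ ≤ 2 * C3 * s) :
    Real.sqrt (∫ x, ((∑ j, α j * h ⟪w j, x⟫) - ∑ j, α j * h ⟪w' j, x⟫) ^ 2 ∂P) ≤
      4 * m * C * C1 * C3 * s := by
  set M : ℝ := (m : ℝ) * (2 * C * (2 * C3 * s * C1)) with hM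
  have h2C3s : 0 ≤ 2 * C3 * s := mul_nonneg (by linarith) hs0
  have hM0 : 0 ≤ M := by
    apply mul_nonneg (Nat.cast_nonneg m)
    apply mul_nonneg (by linarith)
    have : 0 ≤ 2 * C3 * s * C1 := mul_nonneg h2C3s hC1.le
    linarith
  have hpt : ∀ x : EuclideanSpace ℝ (Fin d), ‖x‖ ≤ C1 →
      |(∑ j, α j * h ⟪w j, x⟫) - ∑ j, α j * h ⟪w' j, x⟫| ≤ M := by
    intro x hx
    have hterm : ∀ j, |α j * h ⟪w j, x⟫ - α j * h ⟪w' j, x⟫| ≤ 2 * C * (2 * C3 * s * C1) := by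
      intro j
      rw [← mul_sub, abs_mul]
      have hh : |h ⟪w j, x⟫ - h ⟪w' j, x⟫| ≤ 2 * C3 * s * C1 := by
        have h1 : |h ⟪w j, x⟫ - h ⟪w' j, x⟫| ≤ |⟪w j, x⟫ - ⟪w' j, x⟫| := by
          have := hLip.dist_le_mul ⟪w j, x⟫ ⟪w' j, x⟫
          rwa [Real.dist_eq, Real.dist_eq, NNReal.coe_one, one_mul] at this
        have h2 : |⟪w j, x⟫ - ⟪w' j, x⟫| = |⟪w j - w' j, x⟫| := by
          rw [← inner_sub_left]
        have h3 : |⟪w j - w' j, x⟫| ≤ ‖w j - w' j‖ * ‖x‖ := abs_real_inner_le_norm _ _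
        have h4 : ‖w j - w' j‖ * ‖x‖ ≤ 2 * C3 * s * C1 :=
          mul_le_mul (hchord j) hx (norm_nonneg x) h2C3s
        linarith
      exact mul_le_mul (hα j) hh (abs_nonneg _) (by linarith)
    calc |(∑ j, α j * h ⟪w j, x⟫) - ∑ j, α j * h ⟪w' j, x⟫|
        = |∑ j, (α j * h ⟪w j, x⟫ - α j * h ⟪w' j, x⟫)| := by rw [Finset.sum_sub_distrib]
      _ ≤ ∑ j, |α j * h ⟪w j, x⟫ - α j * h ⟪w' j, x⟫| := Finset.abs_sum_le_sum_abs _ _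
      _ ≤ ∑ _j : Fin m, 2 * C * (2 * C3 * s * C1) := Finset.sum_le_sum fun j _ => hterm j
      _ = M := by rw [Finset.sum_const, Finset.card_univ, Fintype.card_fin, nsmul_eq_mul]
  have hint : (∫ x, ((∑ j, α j * h ⟪w j, x⟫) - ∑ j, α j * h ⟪w' j, x⟫) ^ 2 ∂P) ≤ M ^ 2 := by
    have hle : (∫ x, ((∑ j, α j * h ⟪w j, x⟫) - ∑ j, α j * h ⟪w' j, x⟫) ^ 2 ∂P) ≤
        ∫ _x, M ^ 2 ∂P := by
      apply integral_mono_of_nonneg (Filter.Eventually.of_forall fun x => sq_nonneg _)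
        (integrable_const _)
      filter_upwards [hsupp] with x hx
      have := hpt x hx
      have habs := abs_le.mp this
      exact sq_le_sq' (by linarith [habs.1]) habs.2
    rwa [integral_const, probReal_univ, one_smul] at hle
  calc Real.sqrt (∫ x, ((∑ j, α j * h ⟪w j, x⟫) - ∑ j, α j * h ⟪w' j, x⟫) ^ 2 ∂P)
      ≤ Real.sqrt (M ^ 2) := Real.sqrt_le_sqrt hint
    _ = M := Real.sqrt_sq hM0
    _ = 4 * m * C * C1 * C3 * s := by rw [hM]; ring


set_option maxHeartbeats 1000000 in
/-- paper's Lemma 11. Any one-hidden-layer network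
`f'(x) = Σ_j α_j h(⟨w'_j, x⟩)` with `|α_j| ≤ 2C`, `‖w'_j‖₂ ≤ C3` and 1-Lipschitz `h`
admits a diversified counterpart `f` (same `α`, weights `w_j` of the same norms with
pairwise nonobtuse angles at least `θ`) with
`‖f − f'‖_{L²(P)} ≤ 4 m C C1 C3 sin(θ'/2)`, `θ' = min(3mθ, π)`, for any probability
measure `P` supported in the ball of radius `C1`. -/
theorem stmt_18 {d : ℕ} (hd : 2 ≤ d) (θ : ℝ) (hθ : θ ∈ Set.Ioo 0 (Real.pi / 2))
    (m : ℕ) (hm : m ≤ 2 * (Nat.floor ((Real.pi / 2 - θ) / θ) + 1))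
    (C C1 C3 : ℝ) (hC : 0 < C) (hC1 : 0 < C1) (hC3 : 0 < C3)
    (h : ℝ → ℝ) (hLip : LipschitzWith 1 h)
    (P : Measure (EuclideanSpace ℝ (Fin d))) [IsProbabilityMeasure P]
    (hsupp : ∀ᵐ x ∂P, ‖x‖ ≤ C1)
    (α : Fin m → ℝ) (hα : ∀ j, |α j| ≤ 2 * C)
    (w' : Fin m → EuclideanSpace ℝ (Fin d))
    (hw'ne : ∀ j, w' j ≠ 0) (hw'n : ∀ j, ‖w' j‖ ≤ C3) :
    ∃ w : Fin m → EuclideanSpace ℝ (Fin d),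
      (∀ j, w j ≠ 0) ∧
      (∀ j, ‖w j‖ = ‖w' j‖) ∧
      (∀ j k, j ≠ k → θ ≤ rho (w j) (w k)) ∧
      Real.sqrt (∫ x, ((∑ j, α j * h ⟪w j, x⟫) - ∑ j, α j * h ⟪w' j, x⟫) ^ 2 ∂P) ≤
        4 * m * C * C1 * C3 * Real.sin (min (3 * m * θ) Real.pi / 2) := by
  obtain ⟨hθ0, hθ2⟩ := hθ
  have hπ := Real.pi_pos
  have hdim : 2 ≤ Module.finrank ℝ (EuclideanSpace ℝ (Fin d)) := by
    rw [finrank_euclideanSpace_fin]; exact hd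
  set s : ℝ := Real.sin (min (3 * m * θ) Real.pi / 2) with hs
  have hmin0 : 0 ≤ min (3 * m * θ) Real.pi := le_min (by positivity) hπ.le
  have hminπ : min (3 * m * θ) Real.pi ≤ Real.pi := min_le_right _ _
  have hs0 : 0 ≤ s := Real.sin_nonneg_of_nonneg_of_le_pi (by linarith) (by linarith)
  rcases lt_or_ge (3 * (m : ℝ) * θ) Real.pi with hcase | hcase
  · -- diversification by small rotations
    obtain ⟨w, hne, hnorm, hchord, hsep⟩ :=
      greedy θ hθ0 hθ2 m hcase hdim w' hw'ne m le_rfl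
    have hmin : min (3 * (m : ℝ) * θ) Real.pi = 3 * m * θ := min_eq_left hcase.le
    refine ⟨w, hne, hnorm, fun i j hij => hsep i j hij i.isLt j.isLt, ?_⟩
    apply l2_bound C C1 C3 s hC hC1 hC3 hs0 h hLip P hsupp α hα w w'
    intro j
    have h1 := hchord j
    have h2 : Real.sin (3 * m * θ / 2) = s := by rw [hs, hmin]
    rw [h2] at h1
    have h3 : 2 * ‖w' j‖ * s ≤ 2 * C3 * s := by
      apply mul_le_mul_of_nonneg_right _ hs0
      linarith [hw'n j]
    linarith
  · -- trivial bound: any diversified configuration works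
    have hs1 : s = 1 := by
      rw [hs, min_eq_right hcase, Real.sin_pi_div_two]
    -- m * θ ≤ π from the cardinality hypothesis
    have hmθ : (m : ℝ) * θ ≤ Real.pi := by
      have hfl : ((Nat.floor ((Real.pi / 2 - θ) / θ) : ℕ) : ℝ) ≤ (Real.pi / 2 - θ) / θ :=
        Nat.floor_le (div_nonneg (by linarith) hθ0.le)
      have hmR : (m : ℝ) ≤ 2 * ((Nat.floor ((Real.pi / 2 - θ) / θ) : ℕ) + 1) := by
        exact_mod_cast hm
      have hdiv : ((Real.pi / 2 - θ) / θ) * θ = Real.pi / 2 - θ :=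
        div_mul_cancel₀ _ (ne_of_gt hθ0)
      nlinarith
    obtain ⟨u, e, hu, he, hue⟩ : ∃ u e : EuclideanSpace ℝ (Fin d),
        ‖u‖ = 1 ∧ ‖e‖ = 1 ∧ ⟪u, e⟫ = 0 := by
      set u : EuclideanSpace ℝ (Fin d) := EuclideanSpace.single (⟨0, by omega⟩ : Fin d) (1 : ℝ)
        with hu'
      have hun : ‖u‖ = 1 := by rw [hu', EuclideanSpace.norm_single]; norm_num
      have hune : u ≠ 0 := by intro h0; rw [h0, norm_zero] at hun; norm_num at hun
      obtain ⟨e, he, hue⟩ := exists_unit_ortho hdim hune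
      exact ⟨u, e, hun, he, hue⟩
    obtain ⟨w, hne, hnorm, hsep⟩ := equiangular θ hθ0 hθ2 m hmθ hu he hue
      (fun j => ‖w' j‖) (fun j => norm_pos_iff.mpr (hw'ne j))
    refine ⟨w, hne, hnorm, hsep, ?_⟩
    apply l2_bound C C1 C3 s hC hC1 hC3 hs0 h hLip P hsupp α hα w w'
    intro j
    have : ‖w j - w' j‖ ≤ ‖w j‖ + ‖w' j‖ := norm_sub_le _ _
    rw [hnorm j] at this
    rw [hs1]
    linarith [hw'n j]
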